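/- Let H and H₁ be complex Hilbert spaces, let T : H → H₁ be a bounded invertible linear operator, and let ψ₀ ∈ H and φ₀ ∈ H₁ be nonzero vectors satisfying T⁻¹ φ₀ = ‖ψ₀‖⁻² ψ₀ and (T*)⁻¹ ψ₀ = ‖φ₀‖⁻² φ₀. Let B : H → H₁ be a bounded linear operator with ‖T⁻¹ B‖ < 1. Then T + B is invertible and ‖ψ₀‖² ‖φ₀‖² ( ⟨(T + B)⁻¹ φ₀, ψ₀⟩ − 1 ) = Σ_{n=1}^∞ (−1)^n ⟨ B (T⁻¹ B)^{n−1} ψ₀, φ₀ ⟩, where the series converges absolutely; in particular the sum of this series equals −⟨Bψ₀, φ₀⟩ + ⟨B T⁻¹ B ψ₀, φ₀⟩ − ⟨B T⁻¹ B T⁻¹ B ψ₀, φ₀⟩ + E with |E| ≤ ‖ψ₀‖ ‖φ₀‖ ‖T⁻¹‖³ ‖B‖⁴ / (1 − ‖T⁻¹B‖). -/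

import Mathlib

open scoped InnerProductSpace

/-- Neumann-series expansion of the reduced scalar function. Let `T : H ≃ H₁` be a bounded
invertible operator between complex Hilbert spaces, `ψ₀, φ₀` nonzero vectors with
`T⁻¹ φ₀ = ‖ψ₀‖⁻² ψ₀` and `(T*)⁻¹ ψ₀ = (T⁻¹)* ψ₀ = ‖φ₀‖⁻² φ₀`, and `B` a bounded operator
with `‖T⁻¹ B‖ < 1`. Then `T + B` is invertible and
`‖ψ₀‖² ‖φ₀‖² (⟨(T+B)⁻¹ φ₀, ψ₀⟩ − 1) = Σ_{n≥1} (−1)^n ⟨B (T⁻¹B)^{n−1} ψ₀, φ₀⟩`,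
the series converging absolutely; moreover the sum equals
`−⟨Bψ₀,φ₀⟩ + ⟨BT⁻¹Bψ₀,φ₀⟩ − ⟨BT⁻¹BT⁻¹Bψ₀,φ₀⟩ + E` with
`|E| ≤ ‖ψ₀‖‖φ₀‖‖T⁻¹‖³‖B‖⁴/(1 − ‖T⁻¹B‖)`. (Recall `⟨a, b⟩ = ⟪b, a⟫_ℂ` in Mathlib's
convention, the inner product here being conjugate-linear in the second argument.) -/
theorem neumann_series_reduced_scalar
    {H H₁ : Type*} [NormedAddCommGroup H] [InnerProductSpace ℂ H] [CompleteSpace H]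
    [NormedAddCommGroup H₁] [InnerProductSpace ℂ H₁] [CompleteSpace H₁]
    (T : H ≃L[ℂ] H₁) (ψ₀ : H) (φ₀ : H₁) (hψ : ψ₀ ≠ 0) (hφ : φ₀ ≠ 0)
    (h1 : T.symm φ₀ = ((‖ψ₀‖ : ℂ) ^ 2)⁻¹ • ψ₀)
    (h2 : ContinuousLinearMap.adjoint (T.symm : H₁ →L[ℂ] H) ψ₀ = ((‖φ₀‖ : ℂ) ^ 2)⁻¹ • φ₀)
    (B : H →L[ℂ] H₁) (hB : ‖(T.symm : H₁ →L[ℂ] H).comp B‖ < 1) :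
    ∃ e : H ≃L[ℂ] H₁, (e : H →L[ℂ] H₁) = (T : H →L[ℂ] H₁) + B ∧
      Summable (fun n : ℕ =>
        ‖⟪φ₀, B ((((T.symm : H₁ →L[ℂ] H).comp B) ^ n) ψ₀)⟫_ℂ‖) ∧
      HasSum (fun n : ℕ =>
          (-1 : ℂ) ^ (n + 1) * ⟪φ₀, B ((((T.symm : H₁ →L[ℂ] H).comp B) ^ n) ψ₀)⟫_ℂ)
        ((‖ψ₀‖ : ℂ) ^ 2 * (‖φ₀‖ : ℂ) ^ 2 * (⟪ψ₀, e.symm φ₀⟫_ℂ - 1)) ∧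
      ∃ E : ℂ,
        (‖ψ₀‖ : ℂ) ^ 2 * (‖φ₀‖ : ℂ) ^ 2 * (⟪ψ₀, e.symm φ₀⟫_ℂ - 1) =
          -⟪φ₀, B ψ₀⟫_ℂ + ⟪φ₀, B (T.symm (B ψ₀))⟫_ℂ
            - ⟪φ₀, B (T.symm (B (T.symm (B ψ₀))))⟫_ℂ + E ∧
        ‖E‖ ≤ ‖ψ₀‖ * ‖φ₀‖ * ‖(T.symm : H₁ →L[ℂ] H)‖ ^ 3 * ‖B‖ ^ 4 /
          (1 - ‖(T.symm : H₁ →L[ℂ] H).comp B‖) := by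
  set S : H →L[ℂ] H := (T.symm : H₁ →L[ℂ] H).comp B with hS
  have hnegS : ‖(-S : H →L[ℂ] H)‖ < 1 := by simpa using hB
  set u : (H →L[ℂ] H)ˣ := Units.oneSub (-S) hnegS with hu
  have huval : (u : H →L[ℂ] H) = 1 + S := by simp [hu, Units.oneSub, sub_neg_eq_add]
  have hinv₁ : ∀ y : H, ((u⁻¹ : (H →L[ℂ] H)ˣ) : H →L[ℂ] H) ((u : H →L[ℂ] H) y) = y := by
    intro y
    rw [← ContinuousLinearMap.mul_apply, u.inv_mul, ContinuousLinearMap.one_apply]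
  have hinv₂ : ∀ y : H, (u : H →L[ℂ] H) (((u⁻¹ : (H →L[ℂ] H)ˣ) : H →L[ℂ] H) y) = y := by
    intro y
    rw [← ContinuousLinearMap.mul_apply, u.mul_inv, ContinuousLinearMap.one_apply]
  have h0 : ∀ y : H, T y + B y = T ((u : H →L[ℂ] H) y) := by
    intro y; rw [huval]; simp [hS]
  have hleft : Function.LeftInverse
      (((u⁻¹ : (H →L[ℂ] H)ˣ) : H →L[ℂ] H).comp (T.symm : H₁ →L[ℂ] H))
      ((T : H →L[ℂ] H₁) + B) := by
    intro x
    simp only [Pi.add_apply, ContinuousLinearMap.comp_apply, ContinuousLinearEquiv.coe_coe]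
    rw [h0 x, T.symm_apply_apply]
    exact hinv₁ x
  have hright : Function.RightInverse
      (((u⁻¹ : (H →L[ℂ] H)ˣ) : H →L[ℂ] H).comp (T.symm : H₁ →L[ℂ] H))
      ((T : H →L[ℂ] H₁) + B) := by
    intro x
    simp only [Pi.add_apply, ContinuousLinearMap.comp_apply, ContinuousLinearEquiv.coe_coe]
    rw [h0, hinv₂]
    exact T.apply_symm_apply x
  set e : H ≃L[ℂ] H₁ := ContinuousLinearEquiv.equivOfInverse
    ((T : H →L[ℂ] H₁) + B)
    (((u⁻¹ : (H →L[ℂ] H)ˣ) : H →L[ℂ] H).comp (T.symm : H₁ →L[ℂ] H)) hleft hright with he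
  have hecoe : (e : H →L[ℂ] H₁) = (T : H →L[ℂ] H₁) + B := rfl
  have hesymm : e.symm φ₀ =
      ((‖ψ₀‖ : ℂ) ^ 2)⁻¹ • ((u⁻¹ : (H →L[ℂ] H)ˣ) : H →L[ℂ] H) ψ₀ := by
    have hx : e.symm φ₀ = ((u⁻¹ : (H →L[ℂ] H)ˣ) : H →L[ℂ] H) (T.symm φ₀) := rfl
    rw [hx, h1, map_smul]
  -- geometric series of operators, applied and paired
  have hgeo : HasSum (fun n : ℕ => (-S) ^ n) ((u⁻¹ : (H →L[ℂ] H)ˣ) : H →L[ℂ] H) := by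
    have hx : ((u⁻¹ : (H →L[ℂ] H)ˣ) : H →L[ℂ] H) = ∑' n : ℕ, (-S) ^ n := rfl
    rw [hx]
    exact (summable_geometric_of_norm_lt_one hnegS).hasSum
  have happ : HasSum (fun n : ℕ => ((-S) ^ n) ψ₀)
      (((u⁻¹ : (H →L[ℂ] H)ˣ) : H →L[ℂ] H) ψ₀) :=
    hgeo.mapL (ContinuousLinearMap.apply ℂ H ψ₀)
  have hinner : HasSum (fun n : ℕ => ⟪ψ₀, ((-S) ^ n) ψ₀⟫_ℂ)
      ⟪ψ₀, ((u⁻¹ : (H →L[ℂ] H)ˣ) : H →L[ℂ] H) ψ₀⟫_ℂ :=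
    happ.mapL (innerSL ℂ ψ₀)
  have hpowfun : (fun n : ℕ => ⟪ψ₀, ((-S) ^ n) ψ₀⟫_ℂ)
      = fun n : ℕ => (-1 : ℂ) ^ n * ⟪ψ₀, (S ^ n) ψ₀⟫_ℂ := by
    funext n
    have hx : (-S : H →L[ℂ] H) = (-1 : ℂ) • S := by simp
    rw [hx, smul_pow, ContinuousLinearMap.smul_apply, inner_smul_right]
  rw [hpowfun] at hinner
  -- drop the n = 0 term
  have h00 : (-1 : ℂ) ^ (0 : ℕ) * ⟪ψ₀, (S ^ (0 : ℕ)) ψ₀⟫_ℂ = (‖ψ₀‖ : ℂ) ^ 2 := by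
    simp [inner_self_eq_norm_sq_to_K]
  have hshift : HasSum (fun n : ℕ => (-1 : ℂ) ^ (n + 1) * ⟪ψ₀, (S ^ (n + 1)) ψ₀⟫_ℂ)
      (⟪ψ₀, ((u⁻¹ : (H →L[ℂ] H)ˣ) : H →L[ℂ] H) ψ₀⟫_ℂ - (‖ψ₀‖ : ℂ) ^ 2) := by
    have hx := (hasSum_nat_add_iff' (f := fun n : ℕ => (-1 : ℂ) ^ n * ⟪ψ₀, (S ^ n) ψ₀⟫_ℂ) 1).mpr
      hinner
    simpa [inner_self_eq_norm_sq_to_K] using hx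
  -- convert inner products via the adjoint relation
  have hφ2 : ((‖φ₀‖ : ℂ) ^ 2) ≠ 0 := pow_ne_zero 2 (by simpa using hφ)
  have hψ2 : ((‖ψ₀‖ : ℂ) ^ 2) ≠ 0 := pow_ne_zero 2 (by simpa using hψ)
  have hadj : ∀ w : H₁, ⟪ψ₀, T.symm w⟫_ℂ = ((‖φ₀‖ : ℂ) ^ 2)⁻¹ * ⟪φ₀, w⟫_ℂ := by
    intro w
    have h := ContinuousLinearMap.adjoint_inner_left (T.symm : H₁ →L[ℂ] H) w ψ₀
    rw [h2, inner_smul_left] at h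
    have hconj : (starRingEnd ℂ) (((‖φ₀‖ : ℂ) ^ 2)⁻¹) = ((‖φ₀‖ : ℂ) ^ 2)⁻¹ := by
      simp [map_inv₀, map_pow, Complex.conj_ofReal]
    rw [hconj] at h
    exact h.symm
  have hterm : ∀ n : ℕ, (-1 : ℂ) ^ (n + 1) * ⟪ψ₀, (S ^ (n + 1)) ψ₀⟫_ℂ
      = ((‖φ₀‖ : ℂ) ^ 2)⁻¹ * ((-1 : ℂ) ^ (n + 1) * ⟪φ₀, B ((S ^ n) ψ₀)⟫_ℂ) := by
    intro n
    have hx : (S ^ (n + 1)) ψ₀ = T.symm (B ((S ^ n) ψ₀)) := by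
      rw [pow_succ']
      rfl
    rw [hx, hadj]
    ring
  simp only [hterm] at hshift
  -- the main HasSum statement
  have hmain : HasSum (fun n : ℕ => (-1 : ℂ) ^ (n + 1) * ⟪φ₀, B ((S ^ n) ψ₀)⟫_ℂ)
      ((‖ψ₀‖ : ℂ) ^ 2 * (‖φ₀‖ : ℂ) ^ 2 * (⟪ψ₀, e.symm φ₀⟫_ℂ - 1)) := by
    have hm := hshift.mul_left ((‖φ₀‖ : ℂ) ^ 2)
    have hfun : (fun n : ℕ => (‖φ₀‖ : ℂ) ^ 2 *
          (((‖φ₀‖ : ℂ) ^ 2)⁻¹ * ((-1 : ℂ) ^ (n + 1) * ⟪φ₀, B ((S ^ n) ψ₀)⟫_ℂ)))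
        = fun n : ℕ => (-1 : ℂ) ^ (n + 1) * ⟪φ₀, B ((S ^ n) ψ₀)⟫_ℂ := by
      funext n
      field_simp
      exact mul_div_cancel_left₀ _ (by simpa using hφ)
    rw [hfun] at hm
    have hval : (‖ψ₀‖ : ℂ) ^ 2 * (‖φ₀‖ : ℂ) ^ 2 * (⟪ψ₀, e.symm φ₀⟫_ℂ - 1)
        = (‖φ₀‖ : ℂ) ^ 2 * (⟪ψ₀, ((u⁻¹ : (H →L[ℂ] H)ˣ) : H →L[ℂ] H) ψ₀⟫_ℂ - (‖ψ₀‖ : ℂ) ^ 2) := by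
      rw [hesymm, inner_smul_right]
      have hn : (‖ψ₀‖ : ℂ) ≠ 0 := by simpa using hψ
      field_simp
    rw [hval]
    exact hm
  -- summability of norms
  have hS0 : (0 : ℝ) ≤ ‖S‖ := norm_nonneg _
  have hSn : ∀ n : ℕ, ‖(S ^ n) ψ₀‖ ≤ ‖S‖ ^ n * ‖ψ₀‖ := by
    intro n
    induction n with
    | zero => simp
    | succ n ih =>
      have hx : (S ^ (n + 1)) ψ₀ = S ((S ^ n) ψ₀) := by rw [pow_succ']; rfl
      rw [hx]
      calc ‖S ((S ^ n) ψ₀)‖ ≤ ‖S‖ * ‖(S ^ n) ψ₀‖ := S.le_opNorm _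
        _ ≤ ‖S‖ * (‖S‖ ^ n * ‖ψ₀‖) := by gcongr
        _ = ‖S‖ ^ (n + 1) * ‖ψ₀‖ := by ring
  have hbound : ∀ n : ℕ, ‖⟪φ₀, B ((S ^ n) ψ₀)⟫_ℂ‖ ≤ ‖φ₀‖ * ‖B‖ * ‖ψ₀‖ * ‖S‖ ^ n := by
    intro n
    calc ‖⟪φ₀, B ((S ^ n) ψ₀)⟫_ℂ‖ ≤ ‖φ₀‖ * ‖B ((S ^ n) ψ₀)‖ := norm_inner_le_norm _ _
      _ ≤ ‖φ₀‖ * (‖B‖ * ‖(S ^ n) ψ₀‖) := by gcongr; exact B.le_opNorm _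
      _ ≤ ‖φ₀‖ * (‖B‖ * (‖S‖ ^ n * ‖ψ₀‖)) := by gcongr; exact hSn n
      _ = ‖φ₀‖ * ‖B‖ * ‖ψ₀‖ * ‖S‖ ^ n := by ring
  have hsummnorm : Summable (fun n : ℕ => ‖⟪φ₀, B ((S ^ n) ψ₀)⟫_ℂ‖) := by
    refine Summable.of_nonneg_of_le (fun n => norm_nonneg _) hbound ?_
    exact (summable_geometric_of_lt_one hS0 hB).mul_left _
  -- error term
  set g : ℕ → ℂ := fun n => (-1 : ℂ) ^ (n + 1) * ⟪φ₀, B ((S ^ n) ψ₀)⟫_ℂ with hg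
  have htail : HasSum (fun n : ℕ => g (n + 3))
      ((‖ψ₀‖ : ℂ) ^ 2 * (‖φ₀‖ : ℂ) ^ 2 * (⟪ψ₀, e.symm φ₀⟫_ℂ - 1)
        - ∑ i ∈ Finset.range 3, g i) :=
    (hasSum_nat_add_iff' 3).mpr hmain
  set E : ℂ := (‖ψ₀‖ : ℂ) ^ 2 * (‖φ₀‖ : ℂ) ^ 2 * (⟪ψ₀, e.symm φ₀⟫_ℂ - 1)
      - ∑ i ∈ Finset.range 3, g i with hE
  have hsum3 : ∑ i ∈ Finset.range 3, g i
      = -⟪φ₀, B ψ₀⟫_ℂ + ⟪φ₀, B (T.symm (B ψ₀))⟫_ℂ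
        - ⟪φ₀, B (T.symm (B (T.symm (B ψ₀))))⟫_ℂ := by
    have e1 : (S ^ (1 : ℕ)) ψ₀ = T.symm (B ψ₀) := by rw [pow_one]; rfl
    have e2 : (S ^ (2 : ℕ)) ψ₀ = T.symm (B (T.symm (B ψ₀))) := by
      rw [sq]
      simp [hS, ContinuousLinearMap.mul_apply]
    rw [Finset.sum_range_succ, Finset.sum_range_succ, Finset.sum_range_one]
    simp only [hg, pow_zero, e1, e2]
    ring_nf
    simp [pow_succ]
    ring
  -- bound on E
  have h1S : (0 : ℝ) < 1 - ‖S‖ := by linarith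
  have hEtsum : E = ∑' n : ℕ, g (n + 3) := htail.tsum_eq.symm
  have hgsumm : Summable (fun n : ℕ => ‖g (n + 3)‖) := by
    have : Summable (fun n : ℕ => ‖g n‖) := by
      simpa [hg, norm_mul] using hsummnorm
    exact this.comp_injective (add_left_injective 3)
  have hEbound : ‖E‖ ≤ ‖ψ₀‖ * ‖φ₀‖ * ‖(T.symm : H₁ →L[ℂ] H)‖ ^ 3 * ‖B‖ ^ 4 / (1 - ‖S‖) := by
    have hb1 : ‖E‖ ≤ ∑' n : ℕ, ‖g (n + 3)‖ := by
      rw [hEtsum]; exact norm_tsum_le_tsum_norm hgsumm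
    have hb2 : ∑' n : ℕ, ‖g (n + 3)‖
        ≤ ∑' n : ℕ, (‖φ₀‖ * ‖B‖ * ‖ψ₀‖ * ‖S‖ ^ 3) * ‖S‖ ^ n := by
      refine Summable.tsum_le_tsum ?_ hgsumm ?_
      · intro n
        have := hbound (n + 3)
        calc ‖g (n + 3)‖ = ‖⟪φ₀, B ((S ^ (n + 3)) ψ₀)⟫_ℂ‖ := by simp [hg, norm_mul]
          _ ≤ ‖φ₀‖ * ‖B‖ * ‖ψ₀‖ * ‖S‖ ^ (n + 3) := this
          _ = (‖φ₀‖ * ‖B‖ * ‖ψ₀‖ * ‖S‖ ^ 3) * ‖S‖ ^ n := by ring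
      · exact (summable_geometric_of_lt_one hS0 hB).mul_left _
    have hb3 : ∑' n : ℕ, (‖φ₀‖ * ‖B‖ * ‖ψ₀‖ * ‖S‖ ^ 3) * ‖S‖ ^ n
        = (‖φ₀‖ * ‖B‖ * ‖ψ₀‖ * ‖S‖ ^ 3) * (1 - ‖S‖)⁻¹ := by
      rw [tsum_mul_left, tsum_geometric_of_lt_one hS0 hB]
    have hScomp : ‖S‖ ≤ ‖(T.symm : H₁ →L[ℂ] H)‖ * ‖B‖ := ContinuousLinearMap.opNorm_comp_le _ _
    have hb4 : ‖φ₀‖ * ‖B‖ * ‖ψ₀‖ * ‖S‖ ^ 3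
        ≤ ‖ψ₀‖ * ‖φ₀‖ * ‖(T.symm : H₁ →L[ℂ] H)‖ ^ 3 * ‖B‖ ^ 4 := by
      calc ‖φ₀‖ * ‖B‖ * ‖ψ₀‖ * ‖S‖ ^ 3
          ≤ ‖φ₀‖ * ‖B‖ * ‖ψ₀‖ * (‖(T.symm : H₁ →L[ℂ] H)‖ * ‖B‖) ^ 3 := by
            gcongr
        _ = ‖ψ₀‖ * ‖φ₀‖ * ‖(T.symm : H₁ →L[ℂ] H)‖ ^ 3 * ‖B‖ ^ 4 := by ring
    calc ‖E‖ ≤ (‖φ₀‖ * ‖B‖ * ‖ψ₀‖ * ‖S‖ ^ 3) * (1 - ‖S‖)⁻¹ := by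
          rw [← hb3]; exact hb1.trans hb2
      _ ≤ (‖ψ₀‖ * ‖φ₀‖ * ‖(T.symm : H₁ →L[ℂ] H)‖ ^ 3 * ‖B‖ ^ 4) * (1 - ‖S‖)⁻¹ := by
          gcongr
      _ = ‖ψ₀‖ * ‖φ₀‖ * ‖(T.symm : H₁ →L[ℂ] H)‖ ^ 3 * ‖B‖ ^ 4 / (1 - ‖S‖) := by
          rw [div_eq_mul_inv]
  refine ⟨e, hecoe, hsummnorm, hmain, E, ?_, hEbound⟩
  rw [← hsum3]
  rw [hE]
  ring
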